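/- With ρ = length_R(Λ/R) the genus of I, e the multiplicity, ν the reduction exponent, δ = length_R(R̄/R) and c the conductor of v(R), one has 2ρ = eν + (2δ − c) − length_R(R:Λ / I^ν) − length_R(ωΛ/Λ), where ω is a canonical module of R with R ⊆ ω ⊂ R̄. -/

import Mathlib

open Submodule IsLocalRing

noncomputable section

/-- Length of an `R`-module, defined as the Krull dimension of its submodule lattice. -/
def modLength (R : Type*) [Ring R] (M : Type*) [AddCommGroup M] [Module R M] : WithBot ℕ∞ :=
  Order.krullDim (Submodule R M)

/-- Length of the quotient `I / J` for submodules `J ≤ I` of an ambient module. -/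
def qlen (R : Type*) [CommRing R] {K : Type*} [AddCommGroup K] [Module R K]
    (I J : Submodule R K) : WithBot ℕ∞ :=
  modLength R (I ⧸ (J.comap I.subtype))

/-- The image of an ideal of `R` in `K`, viewed as an `R`-submodule of `K`. -/
def idl (R : Type*) [CommRing R] (K : Type*) [CommRing K] [Algebra R K] (I : Ideal R) :
    Submodule R K :=
  Submodule.map (Algebra.linearMap R K) I

/-- The blowing-up `Λ(I) = ⋃ₙ (Iⁿ : Iⁿ)` of `R` along `I`, inside `K`. -/
def blowup (R : Type*) [CommRing R] (K : Type*) [CommRing K] [Algebra R K] (I : Ideal R) :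
    Submodule R K :=
  ⨆ n : ℕ, (idl R K I ^ n) / (idl R K I ^ n)

/-- The set of values of the nonzero elements of a fractional ideal. -/
def vvals {R : Type*} [CommRing R] {K : Type*} [CommRing K] [Algebra R K]
    (v : K → WithTop ℤ) (J : Submodule R K) : Set (WithTop ℤ) :=
  v '' {y | y ∈ J ∧ y ≠ 0}


noncomputable section

section OrderInfra

open Order

variable {α β γ : Type*}

lemma my_krullDim_le_of_forall {n : ℕ} [Preorder α]
    (h : ∀ p : LTSeries α, p.length ≤ n) : Order.krullDim α ≤ (n : WithBot ℕ∞) := by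
  rw [Order.krullDim]
  exact iSup_le fun p => by exact_mod_cast h p

lemma my_length_le_of_krullDim_le {n : ℕ} [Preorder α] {p : LTSeries α}
    (h : Order.krullDim α ≤ (n : WithBot ℕ∞)) : p.length ≤ n := by
  have := (LTSeries.length_le_krullDim p).trans h
  exact_mod_cast this

lemma my_exists_ltseries {n : ℕ} [Preorder α] [Nonempty α]
    (h : (n : WithBot ℕ∞) ≤ Order.krullDim α) : ∃ p : LTSeries α, n ≤ p.length := by
  by_contra hc
  push_neg at hc
  have hn : 1 ≤ n := by
    have := hc (RelSeries.singleton _ (Classical.arbitrary α)); simp at this; omega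
  have hd : Order.krullDim α ≤ ((n - 1 : ℕ) : WithBot ℕ∞) :=
    my_krullDim_le_of_forall fun p => by have := hc p; omega
  have hnn : (n : WithBot ℕ∞) ≤ ((n-1 : ℕ) : WithBot ℕ∞) := h.trans hd
  have : n ≤ n - 1 := by exact_mod_cast hnn
  omega

/-- Chain extension helper. -/
lemma my_aux_snoc [PartialOrder γ] (s : LTSeries γ) (v : γ) (h : s.last ≤ v) :
    ∃ s' : LTSeries γ, s.length ≤ s'.length ∧ s'.last = v ∧
      (s.last < v → s.length + 1 ≤ s'.length) := by
  rcases eq_or_lt_of_le h with he | hl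
  · exact ⟨s, le_rfl, he, fun hx => (hx.ne he).elim⟩
  · exact ⟨s.snoc v hl, by simp, by simp, fun _ => by simp⟩

/-- A chain in a product is dominated by chains in the factors, anchored at the last element. -/
lemma my_prod_chain [PartialOrder α] [PartialOrder β] (p : LTSeries (α × β)) :
    ∃ (q : LTSeries α) (r : LTSeries β),
      p.length ≤ q.length + r.length ∧ q.last = p.last.1 ∧ r.last = p.last.2 := by
  induction' hn : p.length with n ih generalizing p
  · exact ⟨RelSeries.singleton _ p.last.1, RelSeries.singleton _ p.last.2, by simp, rfl, rfl⟩
  · have h0 : p.length ≠ 0 := by omega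
    obtain ⟨q, r, hlen, hq, hr⟩ := ih p.eraseLast (by simp [hn])
    have hlt : p.eraseLast.last < p.last := p.eraseLast_last_rel_last h0
    have hme := Prod.le_def.1 hlt.le
    obtain ⟨q', hq1, hq2, hq3⟩ := my_aux_snoc q p.last.1 (hq ▸ hme.1)
    obtain ⟨r', hr1, hr2, hr3⟩ := my_aux_snoc r p.last.2 (hr ▸ hme.2)
    refine ⟨q', r', ?_, hq2, hr2⟩
    have hel : p.eraseLast.length = n := by simp [hn]
    rw [Prod.lt_iff] at hlt
    rcases hlt with ⟨hs, _⟩ | ⟨_, hs⟩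
    · have := hq3 (hq ▸ hs); omega
    · have := hr3 (hr ▸ hs); omega

lemma my_krullDim_Icc_congr {L L' : Type*} [Preorder L] [Preorder L'] (f : L ≃o L') (B A : L) :
    Order.krullDim (Set.Icc B A) = Order.krullDim (Set.Icc (f B) (f A)) := by
  refine Order.krullDim_eq_of_orderIso
    ⟨⟨fun d => ⟨f d.1, f.le_iff_le.2 d.2.1, f.le_iff_le.2 d.2.2⟩,
      fun d => ⟨f.symm d.1, by simpa using f.symm.monotone d.2.1,
        by simpa using f.symm.monotone d.2.2⟩,
      fun d => Subtype.ext (by simp), fun d => Subtype.ext (by simp)⟩, ?_⟩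
  intro d d'
  exact f.le_iff_le

end OrderInfra

set_option linter.unusedSectionVars false

section FlenInfra

open Order

variable {L : Type*} [Lattice L] [IsModularLattice L]

/-- Interval length: Krull dimension of the interval `[B, A]`. -/
def myflen (B A : L) : WithBot ℕ∞ := Order.krullDim (Set.Icc B A)

lemma myflen_nonneg {B A : L} (h : B ≤ A) : 0 ≤ myflen B A := by
  haveI : Nonempty (Set.Icc B A) := ⟨⟨B, le_rfl, h⟩⟩
  exact Order.krullDim_nonneg

lemma myflen_mono {C' C A A' : L} (h1 : C' ≤ C) (h2 : A ≤ A') :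
    myflen C A ≤ myflen C' A' := by
  apply Order.krullDim_le_of_strictMono
    (fun D : Set.Icc C A => (⟨D.1, h1.trans D.2.1, D.2.2.trans h2⟩ : Set.Icc C' A'))
  intro D D' h
  exact Subtype.mk_lt_mk.2 (Subtype.coe_lt_coe.2 h)

lemma my_pin_aux {d : WithBot ℕ∞} {n : ℕ} (h : d ≤ (n : ℕ)) (h0 : 0 ≤ d) :
    ∃ m : ℕ, m ≤ n ∧ d = (m : ℕ) := by
  have hne : d ≠ ⊥ := by intro hb; rw [hb] at h0; exact absurd h0 (by simp)
  lift d to ℕ∞ using hne with x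
  have hxt : x ≠ ⊤ := by
    rintro rfl
    have h2 : (⊤ : ℕ∞) ≤ (n : ℕ∞) := by exact_mod_cast h
    simp at h2
  lift x to ℕ using hxt with m
  exact ⟨m, by exact_mod_cast h, by norm_cast⟩

lemma myflen_pin {B A : L} {n : ℕ} (hBA : B ≤ A) (h : myflen B A ≤ (n : ℕ)) :
    ∃ m : ℕ, m ≤ n ∧ myflen B A = (m : ℕ) :=
  my_pin_aux h (myflen_nonneg hBA)

lemma myflen_add {C B A : L} (hCB : C ≤ B) (hBA : B ≤ A) {a b : ℕ}
    (ha : myflen C B = (a : ℕ)) (hb : myflen B A = (b : ℕ)) :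
    myflen C A = ((a + b : ℕ) : WithBot ℕ∞) := by
  have hCA : C ≤ A := hCB.trans hBA
  apply le_antisymm
  · apply my_krullDim_le_of_forall
    intro p
    have hf : StrictMono (fun D : Set.Icc C A =>
        ((⟨D.1 ⊓ B, le_inf D.2.1 hCB, inf_le_right⟩ : Set.Icc C B),
         (⟨D.1 ⊔ B, le_sup_right, sup_le D.2.2 hBA⟩ : Set.Icc B A))) := by
      intro D D' h
      have hlt : D.1 < D'.1 := Subtype.coe_lt_coe.2 h
      have := strictMono_inf_prod_sup (z := B) hlt
      rw [Prod.lt_iff] at this ⊢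
      rcases this with ⟨h1, h2⟩ | ⟨h1, h2⟩
      · exact Or.inl ⟨Subtype.mk_lt_mk.2 h1, Subtype.mk_le_mk.2 h2⟩
      · exact Or.inr ⟨Subtype.mk_le_mk.2 h1, Subtype.mk_lt_mk.2 h2⟩
    obtain ⟨q, r, hle, _, _⟩ := my_prod_chain (p.map _ hf)
    have hq : q.length ≤ a := my_length_le_of_krullDim_le (le_of_eq ha)
    have hr : r.length ≤ b := my_length_le_of_krullDim_le (le_of_eq hb)
    have hpl : (p.map _ hf).length = p.length := rfl
    omega
  · haveI : Nonempty (Set.Icc C B) := ⟨⟨C, le_rfl, hCB⟩⟩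
    haveI : Nonempty (Set.Icc B A) := ⟨⟨B, le_rfl, hBA⟩⟩
    obtain ⟨q, hq⟩ := my_exists_ltseries (n := a) (le_of_eq ha.symm)
    obtain ⟨r, hr⟩ := my_exists_ltseries (n := b) (le_of_eq hb.symm)
    have hfq : StrictMono (fun d : Set.Icc C B => (⟨d.1, d.2.1, d.2.2.trans hBA⟩ : Set.Icc C A)) :=
      fun _ _ h => Subtype.mk_lt_mk.2 (Subtype.coe_lt_coe.2 h)
    have hfr : StrictMono (fun d : Set.Icc B A => (⟨d.1, hCB.trans d.2.1, d.2.2⟩ : Set.Icc C A)) :=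
      fun _ _ h => Subtype.mk_lt_mk.2 (Subtype.coe_lt_coe.2 h)
    set q' := q.map _ hfq with hq'
    set r' := r.map _ hfr with hr'
    have hconn : q'.last ≤ r'.head := by
      have h1 : (q'.last : L) = q.last.1 := by rw [hq']; simp
      have h2 : (r'.head : L) = r.head.1 := by rw [hr']; simp
      refine Subtype.coe_le_coe.1 ?_
      rw [h1, h2]
      exact q.last.2.2.trans r.head.2.1
    have key : ∃ s : LTSeries (Set.Icc C A), a + b ≤ s.length := by
      rcases eq_or_lt_of_le hconn with he | hl
      · refine ⟨RelSeries.smash q' r' he, ?_⟩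
        have : (RelSeries.smash q' r' he).length = q'.length + r'.length := rfl
        have hq'' : q'.length = q.length := rfl
        have hr'' : r'.length = r.length := rfl
        omega
      · refine ⟨RelSeries.append q' r' hl, ?_⟩
        have : (RelSeries.append q' r' hl).length = q'.length + r'.length + 1 := rfl
        have hq'' : q'.length = q.length := rfl
        have hr'' : r'.length = r.length := rfl
        omega
    obtain ⟨s, hs⟩ := key
    calc ((a + b : ℕ) : WithBot ℕ∞) ≤ (s.length : WithBot ℕ∞) := by exact_mod_cast hs
    _ ≤ myflen C A := LTSeries.length_le_krullDim s

lemma myflen_split {C B A : L} (hCB : C ≤ B) (hBA : B ≤ A) {n : ℕ}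
    (h : myflen C A = (n : ℕ)) :
    ∃ a b : ℕ, myflen C B = (a : ℕ) ∧ myflen B A = (b : ℕ) ∧ a + b = n := by
  obtain ⟨a, _, ha⟩ := myflen_pin hCB ((myflen_mono le_rfl hBA).trans (le_of_eq h))
  obtain ⟨b, _, hb⟩ := myflen_pin hBA ((myflen_mono hCB le_rfl).trans (le_of_eq h))
  refine ⟨a, b, ha, hb, ?_⟩
  have := (myflen_add hCB hBA ha hb).symm.trans h
  exact_mod_cast this

end FlenInfra

section SubmoduleInfra

open Order

/-- `modLength` is invariant under linear equivalence. -/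
lemma my_modLength_congr {R : Type*} [CommRing R] {M N : Type*} [AddCommGroup M] [Module R M]
    [AddCommGroup N] [Module R N] (e : M ≃ₗ[R] N) :
    Order.krullDim (Submodule R M) = Order.krullDim (Submodule R N) :=
  Order.krullDim_eq_of_orderIso (Submodule.orderIsoMapComap e)

lemma my_qlen_eq_flen {R : Type*} [CommRing R] {K : Type*} [AddCommGroup K] [Module R K]
    {A B : Submodule R K} (h : B ≤ A) :
    Order.krullDim (Submodule R (A ⧸ (B.comap A.subtype))) = myflen B A := by
  set p := B.comap A.subtype with hp
  have hmc : Submodule.map A.subtype p = B := by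
    rw [hp, Submodule.map_comap_subtype, inf_eq_right.2 h]
  have hinj := Submodule.injective_subtype A
  have iso2 : {q : Submodule R ↥A // p ≤ q} ≃o Set.Icc B A := by
    refine ⟨⟨fun q => ⟨Submodule.map A.subtype q.1, ?_, Submodule.map_subtype_le A q.1⟩,
      fun D => ⟨Submodule.comap A.subtype D.1, ?_⟩, fun q => ?_, fun D => ?_⟩, ?_⟩
    · rw [← hmc]; exact Submodule.map_mono q.2
    · rw [hp]; exact Submodule.comap_mono D.2.1
    · exact Subtype.ext (Submodule.comap_map_eq_of_injective hinj q.1)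
    · refine Subtype.ext ?_
      simp only [Submodule.map_comap_subtype]
      exact inf_eq_right.2 D.2.2
    · intro q q'
      constructor
      · intro hh
        have hh' : Submodule.map A.subtype q.1 ≤ Submodule.map A.subtype q'.1 := hh
        have := Submodule.comap_mono (f := A.subtype) hh'
        rwa [Submodule.comap_map_eq_of_injective hinj, Submodule.comap_map_eq_of_injective hinj]
          at this
      · exact fun hh => Submodule.map_mono hh
  exact Order.krullDim_eq_of_orderIso ((Submodule.comapMkQRelIso p).trans iso2)

variable {R : Type*} [CommRing R] {K : Type*} [Field K] [Algebra R K]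

lemma my_div_antitone (ω : Submodule R K) {A B : Submodule R K} (h : A ≤ B) :
    ω / B ≤ ω / A := by
  intro z hz
  rw [Submodule.mem_div_iff_forall_mul_mem] at hz ⊢
  exact fun y hy => hz y (h hy)

lemma my_flen_mul {u : K} (hu : u ≠ 0) (B A : Submodule R K) :
    myflen (Submodule.span R {u} * B) (Submodule.span R {u} * A) = myflen B A := by
  let e : K ≃ₗ[R] K := (LinearEquiv.smulOfNeZero K K u hu).restrictScalars R
  have key : ∀ C : Submodule R K, (Submodule.orderIsoMapComap e) C = Submodule.span R {u} * C := by
    intro C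
    ext z
    constructor
    · rintro ⟨a, ha, rfl⟩
      exact Submodule.mem_span_singleton_mul.2 ⟨a, ha, rfl⟩
    · intro hz
      obtain ⟨a, ha, rfl⟩ := Submodule.mem_span_singleton_mul.1 hz
      exact ⟨a, ha, rfl⟩
  have := my_krullDim_Icc_congr (Submodule.orderIsoMapComap e) B A
  rw [key B, key A] at this
  exact this.symm

lemma my_flen_dual {ω P Q : Submodule R K} (hPQ : P ≤ Q)
    (hbid : ∀ D, P ≤ D → D ≤ Q → ω / (ω / D) = D)
    (hbid' : ∀ D', ω / Q ≤ D' → D' ≤ ω / P → ω / (ω / D') = D') :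
    myflen P Q = myflen (ω / Q) (ω / P) := by
  have hP : ω / (ω / P) = P := hbid P le_rfl hPQ
  have hQ : ω / (ω / Q) = Q := hbid Q hPQ le_rfl
  have iso : Set.Icc P Q ≃o (Set.Icc (ω / Q) (ω / P))ᵒᵈ := by
    refine ⟨⟨fun D => OrderDual.toDual ⟨ω / D.1, my_div_antitone ω D.2.2, my_div_antitone ω D.2.1⟩,
      fun D' => ⟨ω / (OrderDual.ofDual D').1, ?_, ?_⟩, fun D => ?_, fun D' => ?_⟩, ?_⟩
    · exact le_trans (le_of_eq hP.symm) (my_div_antitone ω (OrderDual.ofDual D').2.2)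
    · exact le_trans (my_div_antitone ω (OrderDual.ofDual D').2.1) (le_of_eq hQ)
    · exact Subtype.ext (hbid D.1 D.2.1 D.2.2)
    · exact congrArg OrderDual.toDual
        (Subtype.ext (hbid' (OrderDual.ofDual D').1 (OrderDual.ofDual D').2.1
          (OrderDual.ofDual D').2.2))
    · intro D D'
      constructor
      · intro hh
        have h2 : ω / D'.1 ≤ ω / D.1 := hh
        have h3 := my_div_antitone ω h2
        rwa [hbid D.1 D.2.1 D.2.2, hbid D'.1 D'.2.1 D'.2.2] at h3
      · intro hh
        exact (Subtype.mk_le_mk.2 (my_div_antitone ω hh) : _)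
  calc myflen P Q = Order.krullDim (Set.Icc (ω / Q) (ω / P))ᵒᵈ :=
        Order.krullDim_eq_of_orderIso iso
  _ = myflen (ω / Q) (ω / P) := Order.krullDim_orderDual

end SubmoduleInfra

section AlgebraFacts

variable {R : Type*} [CommRing R] [IsDomain R] [IsNoetherianRing R]
  {K : Type*} [Field K] [Algebra R K] [IsFractionRing R K]

lemma my_idl_mul (I₁ I₂ : Ideal R) : idl R K (I₁ * I₂) = idl R K I₁ * idl R K I₂ :=
  Submodule.map_mul I₁ I₂ (Algebra.ofId R K)

lemma my_idl_pow (I : Ideal R) (n : ℕ) : idl R K (I ^ n) = (idl R K I) ^ n :=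
  Submodule.map_pow I (Algebra.ofId R K) n

lemma my_idl_span (x : R) : idl R K (Ideal.span {x}) = Submodule.span R {algebraMap R K x} := by
  show Submodule.map (Algebra.linearMap R K) (Submodule.span R {x}) = _
  rw [Submodule.map_span, Set.image_singleton, Algebra.linearMap_apply]

lemma my_idl_le_one (I : Ideal R) : idl R K I ≤ 1 := by
  rintro _ ⟨a, -, rfl⟩
  exact Submodule.mem_one.2 ⟨a, rfl⟩

lemma my_idl_ne_bot {I : Ideal R} (hI : I ≠ ⊥) : idl R K I ≠ ⊥ := by
  obtain ⟨a, ha, ha0⟩ := Submodule.exists_mem_ne_zero_of_ne_bot hI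
  intro hb
  have : algebraMap R K a ∈ idl R K I := Submodule.mem_map_of_mem ha
  rw [hb, Submodule.mem_bot] at this
  exact ha0 (IsFractionRing.injective R K (by simpa using this))

lemma my_span_cancel {u : K} (hu : u ≠ 0) {A B : Submodule R K}
    (h : Submodule.span R {u} * A ≤ Submodule.span R {u} * B) : A ≤ B := by
  intro z hz
  have h1 : u * z ∈ Submodule.span R {u} * A :=
    Submodule.mul_mem_mul (Submodule.mem_span_singleton_self u) hz
  obtain ⟨w, hw, hwe⟩ := Submodule.mem_span_singleton_mul.1 (h h1)
  rwa [← mul_left_cancel₀ hu hwe]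

lemma my_pow_span (u : K) (m : ℕ) : (Submodule.span R {u}) ^ m = Submodule.span R {u ^ m} := by
  induction m with
  | zero => rw [pow_zero, pow_zero, Submodule.one_eq_span]
  | succ k ih =>
    rw [pow_succ, ih, Submodule.span_mul_span, Set.singleton_mul_singleton, pow_succ]

lemma my_D_mono (J : Submodule R K) {a b : ℕ} (h : a ≤ b) : J^a / J^a ≤ J^b / J^b := by
  induction b, h using Nat.le_induction with
  | base => exact le_rfl
  | succ n hn ih =>
    refine ih.trans ?_
    rw [Submodule.le_div_iff_mul_le, pow_succ, ← mul_assoc]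
    exact mul_le_mul' (Submodule.le_div_iff_mul_le.1 le_rfl) le_rfl

lemma my_fg_pow {J : Submodule R K} (h : J.FG) (n : ℕ) : (J ^ n).FG := by
  induction n with
  | zero => rw [pow_zero, Submodule.one_eq_span]; exact Submodule.fg_span_singleton 1
  | succ k ih => rw [pow_succ]; exact Submodule.FG.mul ih h

lemma my_one_le_blowup (I : Ideal R) : 1 ≤ blowup R K I := by
  have h0 : (1 : Submodule R K) ≤ (idl R K I) ^ 0 / (idl R K I) ^ 0 := by
    rw [pow_zero]
    exact Submodule.one_le_one_div.2 le_rfl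
  exact h0.trans (le_iSup (fun n => (idl R K I) ^ n / (idl R K I) ^ n) 0)

lemma my_blowup_le_int (I : Ideal R) (hI0 : I ≠ ⊥) :
    blowup R K I ≤ Subalgebra.toSubmodule (integralClosure R K) := by
  apply iSup_le
  intro n z hz
  set J := idl R K I with hJ
  have hfg : (J ^ n).FG := my_fg_pow (Submodule.FG.map _ (IsNoetherian.noetherian I)) n
  have hnb : (J ^ n) ≠ ⊥ := by
    obtain ⟨a, ha, ha0⟩ := Submodule.exists_mem_ne_zero_of_ne_bot (my_idl_ne_bot (K := K) hI0)
    intro hb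
    have : a ^ n ∈ J ^ n := Submodule.pow_mem_pow J ha n
    rw [hb, Submodule.mem_bot] at this
    exact pow_ne_zero n ha0 this
  have hint : IsIntegral R z := by
    refine isIntegral_of_smul_mem_submodule (J ^ n) hnb hfg z (fun y hy => ?_)
    exact Submodule.mem_div_iff_forall_mul_mem.1 hz y hy
  exact (Subalgebra.mem_toSubmodule _).2 ((mem_integralClosure_iff R K).2 hint)

lemma my_one_le_int : (1 : Submodule R K) ≤ Subalgebra.toSubmodule (integralClosure R K) := by
  intro z hz
  obtain ⟨y, rfl⟩ := Submodule.mem_one.1 hz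
  exact (Subalgebra.mem_toSubmodule _).2 (Subalgebra.algebraMap_mem _ y)

lemma my_int_mul_le :
    Subalgebra.toSubmodule (integralClosure R K) * Subalgebra.toSubmodule (integralClosure R K)
      ≤ Subalgebra.toSubmodule (integralClosure R K) := by
  refine Submodule.mul_le.2 fun m hm n hn => ?_
  exact (Subalgebra.mem_toSubmodule _).2
    (mul_mem ((Subalgebra.mem_toSubmodule _).1 hm) ((Subalgebra.mem_toSubmodule _).1 hn))

lemma my_div_ne_bot {T : Submodule R K} (hT : T.FG) : (1 : Submodule R K) / T ≠ ⊥ := by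
  obtain ⟨s, hs⟩ := hT
  obtain ⟨b, hb⟩ := IsLocalization.exist_integer_multiples_of_finset (nonZeroDivisors R) s
  intro hbot
  have hmem : algebraMap R K (b : R) ∈ (1 : Submodule R K) / T := by
    rw [Submodule.mem_div_iff_forall_mul_mem]
    intro y hy
    rw [← hs] at hy
    induction hy using Submodule.span_induction with
    | mem w hw =>
      obtain ⟨r, hr⟩ := hb w hw
      refine Submodule.mem_one.2 ⟨r, ?_⟩
      rw [hr, Algebra.smul_def]
    | zero => rw [mul_zero]; exact Submodule.zero_mem _
    | add w₁ w₂ _ _ h1 h2 => rw [mul_add]; exact Submodule.add_mem _ h1 h2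
    | smul r w _ h1 => rw [mul_smul_comm]; exact Submodule.smul_mem _ r h1
  rw [hbot, Submodule.mem_bot] at hmem
  have : (b : R) = 0 := IsFractionRing.injective R K (by simpa using hmem)
  exact nonZeroDivisors.coe_ne_zero b this

lemma my_fg_of_le_int [Module.Finite R (integralClosure R K)] {D : Submodule R K}
    (h : D ≤ Subalgebra.toSubmodule (integralClosure R K)) : D.FG := by
  set Sm := Subalgebra.toSubmodule (integralClosure R K) with hSm
  haveI : Module.Finite R ↥Sm := inferInstanceAs (Module.Finite R (integralClosure R K))
  haveI : IsNoetherian R ↥Sm := isNoetherian_of_isNoetherianRing_of_finite R ↥Sm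
  have hfg : (Submodule.comap Sm.subtype D).FG := IsNoetherian.noetherian _
  have : Submodule.map Sm.subtype (Submodule.comap Sm.subtype D) = D := by
    rw [Submodule.map_comap_subtype]
    exact inf_eq_right.2 h
  rw [← this]
  exact Submodule.FG.map _ hfg

end AlgebraFacts

section MoreFlen

open Order

lemma myflen_self {L : Type*} [Lattice L] (A : L) : myflen A A = 0 := by
  haveI : Unique ↥(Set.Icc A A) :=
    ⟨⟨⟨A, le_rfl, le_rfl⟩⟩, fun a => Subtype.ext (le_antisymm a.2.2 a.2.1)⟩
  exact Order.krullDim_eq_zero_of_unique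

lemma my_pow_le {R : Type*} [CommRing R] {K : Type*} [Field K] [Algebra R K]
    {A B : Submodule R K} (h : A ≤ B) (n : ℕ) : A ^ n ≤ B ^ n := by
  induction n with
  | zero => exact le_rfl
  | succ k ih => rw [pow_succ, pow_succ]; exact mul_le_mul' ih h

lemma my_one_div_eq {R : Type*} [CommRing R] {K : Type*} [Field K] [Algebra R K]
    {ω : Submodule R K} (hωω : ω / ω = 1) (T : Submodule R K) :
    (1 : Submodule R K) / T = ω / (ω * T) := by
  ext z
  rw [← Submodule.span_singleton_le_iff_mem, ← Submodule.span_singleton_le_iff_mem,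
    Submodule.le_div_iff_mul_le, Submodule.le_div_iff_mul_le, ← hωω,
    Submodule.le_div_iff_mul_le, mul_assoc, mul_comm T ω]

lemma my_div_one {R : Type*} [CommRing R] {K : Type*} [Field K] [Algebra R K]
    (ω : Submodule R K) : ω / 1 = ω := by
  ext z
  rw [Submodule.mem_div_iff_forall_mul_mem]
  constructor
  · intro h
    have := h 1 (Submodule.one_le.1 le_rfl)
    rwa [mul_one] at this
  · intro hz y hy
    obtain ⟨r, rfl⟩ := Submodule.mem_one.1 hy
    rw [mul_comm, ← Algebra.smul_def]
    exact Submodule.smul_mem _ r hz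

end MoreFlen

lemma my_qlen_flen {R : Type*} [CommRing R] {K : Type*} [AddCommGroup K] [Module R K]
    {A B : Submodule R K} (h : B ≤ A) : qlen R A B = myflen B A :=
  my_qlen_eq_flen h

lemma my_nat_pin {a b : ℕ} {d : WithBot ℕ∞} (h1 : d = (a : ℕ)) (h2 : d = (b : ℕ)) : a = b := by
  rw [h1] at h2
  exact_mod_cast h2

theorem stmt_4
    (R : Type*) [CommRing R] [IsDomain R] [IsLocalRing R] [IsNoetherianRing R]
    (K : Type*) [Field K] [Algebra R K] [IsFractionRing R K]
    [IsDiscreteValuationRing (integralClosure R K)]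
    [Module.Finite R (integralClosure R K)]
    (hres : ∀ y : integralClosure R K, ∃ a : R,
      y - algebraMap R (integralClosure R K) a ∈ maximalIdeal (integralClosure R K))
    (hkinf : Infinite (ResidueField R))
    (I : Ideal R) (hI0 : I ≠ ⊥) (hIrad : I.radical = maximalIdeal R)
    (hInp : ¬ I.IsPrincipal)
    (x : R) (hxI : x ∈ I)
    (ν : ℕ) (hν : IsLeast {n : ℕ | ∀ k ≥ n, I ^ (k + 1) = Ideal.span {x} * I ^ k} ν)
    (e : ℕ) (he : (e : WithBot ℕ∞) = modLength R (R ⧸ Ideal.span {x}))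
    (ρ : ℕ) (hρ : (ρ : WithBot ℕ∞) = qlen R (blowup R K I) 1)
    (δ : ℕ) (hδ : (δ : WithBot ℕ∞) = qlen R ((integralClosure R K).toSubmodule) 1)
    (c : ℕ) (hc : (c : WithBot ℕ∞) = qlen R ((integralClosure R K).toSubmodule) ((1 : Submodule R K) / ((integralClosure R K).toSubmodule)))
    (ω : Submodule R K) (hω1 : 1 ≤ ω) (hω2 : ω < ((integralClosure R K).toSubmodule))
    (hωω : ω / ω = 1)
    (hωdual : ∀ J : Submodule R K, J ≠ ⊥ → J.FG → ω / (ω / J) = J)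
    (ℓ₁ : ℕ) (hℓ₁ : (ℓ₁ : WithBot ℕ∞) = qlen R ((1 : Submodule R K) / (blowup R K I)) ((idl R K I) ^ ν))
    (ℓ₂ : ℕ) (hℓ₂ : (ℓ₂ : WithBot ℕ∞) = qlen R (ω * (blowup R K I)) (blowup R K I)) :
    (2 * ρ : ℤ) = (e : ℤ) * ν + (2 * δ - c) - ℓ₁ - ℓ₂ := by
  classical
  set Sm : Submodule R K := (integralClosure R K).toSubmodule with hSmdef
  set Λ : Submodule R K := blowup R K I with hΛdef
  set J : Submodule R K := idl R K I with hJdef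
  set x' : K := algebraMap R K x with hx'def
  set X : Submodule R K := Submodule.span R {x'} with hXdef
  -- x is nonzero
  have hx0 : x ≠ 0 := by
    rintro rfl
    obtain ⟨a, ha, ha0⟩ := Submodule.exists_mem_ne_zero_of_ne_bot hI0
    have h1 : I ^ (ν + 1) = Ideal.span {(0 : R)} * I ^ ν := hν.1 ν le_rfl
    rw [Set.singleton_zero, Ideal.span_zero, bot_mul] at h1
    have : a ^ (ν + 1) ∈ I ^ (ν + 1) := Submodule.pow_mem_pow I ha (ν + 1)
    rw [h1, Submodule.mem_bot] at this
    exact ha0 (pow_eq_zero_iff (by omega) |>.1 this)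
  have hx'0 : x' ≠ 0 := by
    rw [hx'def]
    intro h
    exact hx0 (IsFractionRing.injective R K (by simpa using h))
  -- basic containments
  have hxmem : x' ∈ J := Submodule.mem_map_of_mem hxI
  have hXJ : X ≤ J := (Submodule.span_singleton_le_iff_mem x' J).2 hxmem
  have hJ1 : J ≤ 1 := my_idl_le_one I
  have hX1 : X ≤ 1 := hXJ.trans hJ1
  have h1Λ : (1 : Submodule R K) ≤ Λ := my_one_le_blowup I
  have hΛSm : Λ ≤ Sm := my_blowup_le_int I hI0
  have h1Sm : (1 : Submodule R K) ≤ Sm := my_one_le_int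
  have hωSm : ω ≤ Sm := hω2.le
  -- power identity at the ideal level
  have hpowI : ∀ m : ℕ, I ^ (ν + m) = Ideal.span {x} ^ m * I ^ ν := by
    intro m
    induction m with
    | zero => rw [pow_zero, one_mul, Nat.add_zero]
    | succ k ih =>
      have h1 : I ^ (ν + k + 1) = Ideal.span {x} * I ^ (ν + k) := hν.1 (ν + k) (by omega)
      have : ν + (k + 1) = (ν + k) + 1 := by omega
      rw [this, h1, ih, pow_succ]
      ring
  have hpow : ∀ m : ℕ, J ^ (ν + m) = X ^ m * J ^ ν := by
    intro m
    have h1 : J ^ (ν + m) = idl R K (I ^ (ν + m)) := (my_idl_pow I _).symm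
    rw [h1, hpowI m, my_idl_mul, my_idl_pow, my_idl_pow, my_idl_span]
  -- the blowup stabilizes J^ν
  have hbl : Λ * J ^ ν = J ^ ν := by
    apply le_antisymm
    · have hsup : Λ * J ^ ν = ⨆ n : ℕ, (J ^ n / J ^ n) * J ^ ν := by
        rw [hΛdef]
        exact Submodule.iSup_mul _ _
      rw [hsup]
      apply iSup_le
      intro n
      set E : Submodule R K := J ^ (ν + n) / J ^ (ν + n) with hE
      have hmono : J ^ n / J ^ n ≤ E := my_D_mono J (by omega)
      refine le_trans (mul_le_mul' hmono le_rfl) ?_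
      have h1 : E * J ^ (ν + n) ≤ J ^ (ν + n) :=
        Submodule.le_div_iff_mul_le.1 (le_of_eq hE)
      rw [hpow n, my_pow_span] at h1
      have h2 : Submodule.span R {x' ^ n} * (E * J ^ ν)
          ≤ Submodule.span R {x' ^ n} * J ^ ν := by
        calc Submodule.span R {x' ^ n} * (E * J ^ ν)
            = E * (Submodule.span R {x' ^ n} * J ^ ν) := by ring
        _ ≤ Submodule.span R {x' ^ n} * J ^ ν := h1
      exact my_span_cancel (pow_ne_zero n hx'0) h2
    · calc J ^ ν = 1 * J ^ ν := (one_mul _).symm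
      _ ≤ Λ * J ^ ν := mul_le_mul' h1Λ le_rfl
  -- J^ν = X^ν * Λ
  have hXν : J ^ ν = X ^ ν * Λ := by
    apply le_antisymm
    · set u : K := x' ^ ν with hu
      have hu0 : u ≠ 0 := pow_ne_zero ν hx'0
      set D : Submodule R K := Submodule.span R {u⁻¹} * J ^ ν with hD
      have hDΛ : D ≤ Λ := by
        have h1 : D * J ^ ν = J ^ ν := by
          have h2 : J ^ ν * J ^ ν = J ^ (ν + ν) := by rw [pow_add]
          calc D * J ^ ν = Submodule.span R {u⁻¹} * (J ^ ν * J ^ ν) := by rw [hD]; ring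
          _ = Submodule.span R {u⁻¹} * (X ^ ν * J ^ ν) := by rw [h2, hpow ν]
          _ = (Submodule.span R {u⁻¹} * Submodule.span R {u}) * J ^ ν := by
              rw [my_pow_span]; ring
          _ = Submodule.span R {(1 : K)} * J ^ ν := by
              rw [Submodule.span_mul_span, Set.singleton_mul_singleton,
                inv_mul_cancel₀ hu0]
          _ = J ^ ν := by rw [← Submodule.one_eq_span, one_mul]
        have h3 : D ≤ J ^ ν / J ^ ν := Submodule.le_div_iff_mul_le.2 (le_of_eq h1)
        exact h3.trans (le_iSup (fun n => (J : Submodule R K) ^ n / J ^ n) ν)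
      have h4 : J ^ ν = Submodule.span R {u} * D := by
        rw [hD, ← mul_assoc, Submodule.span_mul_span, Set.singleton_mul_singleton,
          mul_inv_cancel₀ hu0, ← Submodule.one_eq_span, one_mul]
      rw [h4, ← my_pow_span]
      exact mul_le_mul' le_rfl hDΛ
    · have h5 : X ^ ν ≤ J ^ ν := my_pow_le hXJ ν
      calc X ^ ν * Λ ≤ J ^ ν * Λ := mul_le_mul' h5 le_rfl
      _ = Λ * J ^ ν := by ring
      _ = J ^ ν := hbl
  -- conductor and related containments
  set C : Submodule R K := 1 / Sm with hCdef
  have hSmFG : Sm.FG := my_fg_of_le_int le_rfl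
  have hCne : C ≠ ⊥ := my_div_ne_bot hSmFG
  have h1memSm : (1 : K) ∈ Sm := h1Sm (Submodule.one_le.1 le_rfl)
  have h1memΛ : (1 : K) ∈ Λ := h1Λ (Submodule.one_le.1 le_rfl)
  have h1memω : (1 : K) ∈ ω := hω1 (Submodule.one_le.1 le_rfl)
  have hC1 : C ≤ 1 := by
    intro z hz
    have := Submodule.mem_div_iff_forall_mul_mem.1 hz 1 h1memSm
    rwa [mul_one] at this
  have h1ΛC : C ≤ 1 / Λ := my_div_antitone _ hΛSm
  have h1Λ1 : (1 : Submodule R K) / Λ ≤ 1 := by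
    intro z hz
    have := Submodule.mem_div_iff_forall_mul_mem.1 hz 1 h1memΛ
    rwa [mul_one] at this
  have hJν1Λ : J ^ ν ≤ 1 / Λ := by
    rw [Submodule.le_div_iff_mul_le]
    calc J ^ ν * Λ = Λ * J ^ ν := by ring
    _ = J ^ ν := hbl
    _ ≤ 1 ^ ν := my_pow_le hJ1 ν
    _ = 1 := one_pow ν
  -- ω Λ facts
  have hωΛSm : ω * Λ ≤ Sm := (mul_le_mul' hωSm hΛSm).trans my_int_mul_le
  have hΛωΛ : Λ ≤ ω * Λ := by
    calc Λ = 1 * Λ := (one_mul Λ).symm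
    _ ≤ ω * Λ := mul_le_mul' hω1 le_rfl
  have hωωΛ : ω ≤ ω * Λ := by
    calc ω = ω * 1 := (mul_one ω).symm
    _ ≤ ω * Λ := mul_le_mul' le_rfl h1Λ
  have hωΛne : ω * Λ ≠ ⊥ := by
    intro hb
    have : (1 : K) ∈ ω * Λ := hωωΛ h1memω
    rw [hb, Submodule.mem_bot] at this
    exact one_ne_zero this
  -- division identities
  have h1Λω : (1 : Submodule R K) / Λ = ω / (ω * Λ) := my_one_div_eq hωω Λ
  have hdd : ω / ((1 : Submodule R K) / Λ) = ω * Λ := by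
    rw [h1Λω, hωdual (ω * Λ) hωΛne (my_fg_of_le_int hωΛSm)]
  have hωSmSm : ω * Sm = Sm := by
    apply le_antisymm
    · exact (mul_le_mul' hωSm le_rfl).trans my_int_mul_le
    · calc Sm = 1 * Sm := (one_mul Sm).symm
      _ ≤ ω * Sm := mul_le_mul' hω1 le_rfl
  have hCω : ω / Sm = C := by
    rw [hCdef, my_one_div_eq hωω Sm, hωSmSm]
  have hω1' : ω / 1 = ω := my_div_one ω
  -- dualities
  have hdual1 : myflen ((1 : Submodule R K) / Λ) 1 = myflen ω (ω * Λ) := by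
    have h := my_flen_dual (ω := ω) h1Λ1 ?_ ?_
    · rwa [hω1', hdd] at h
    · intro D hD1 hD2
      refine hωdual D ?_ (my_fg_of_le_int (hD2.trans h1Sm))
      intro hb
      rw [hb, le_bot_iff] at hD1
      exact hCne (le_bot_iff.1 (h1ΛC.trans (le_of_eq hD1)))
    · intro D' hD1 hD2
      rw [hω1'] at hD1
      rw [hdd] at hD2
      refine hωdual D' ?_ (my_fg_of_le_int (hD2.trans hωΛSm))
      intro hb
      have : (1 : K) ∈ D' := hD1 h1memω
      rw [hb, Submodule.mem_bot] at this
      exact one_ne_zero this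
  have hdual2 : myflen ω Sm = myflen C 1 := by
    have h := my_flen_dual (ω := ω) hωSm ?_ ?_
    · rwa [hCω, hωω] at h
    · intro D hD1 hD2
      refine hωdual D ?_ (my_fg_of_le_int hD2)
      intro hb
      have : (1 : K) ∈ D := hD1 h1memω
      rw [hb, Submodule.mem_bot] at this
      exact one_ne_zero this
    · intro D' hD1 hD2
      rw [hωω] at hD2
      rw [hCω] at hD1
      refine hωdual D' ?_ (my_fg_of_le_int (hD2.trans h1Sm))
      intro hb
      rw [hb, le_bot_iff] at hD1
      exact hCne hD1
  -- e as an interval length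
  have heflen : myflen X (1 : Submodule R K) = ((e : ℕ) : WithBot ℕ∞) := by
    set N : Submodule R ↥(1 : Submodule R K) := X.comap (1 : Submodule R K).subtype with hN
    have hmem1 : ∀ a : R, Algebra.linearMap R K a ∈ (1 : Submodule R K) := fun a =>
      Submodule.mem_one.2 ⟨a, rfl⟩
    set f : R →ₗ[R] (↥(1 : Submodule R K) ⧸ N) :=
      N.mkQ.comp (LinearMap.codRestrict (1 : Submodule R K) (Algebra.linearMap R K) hmem1)
      with hf
    have hsurj : Function.Surjective f := by
      intro zbar
      obtain ⟨⟨z, hz⟩, rfl⟩ := Submodule.Quotient.mk_surjective N zbar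
      obtain ⟨y, hy⟩ := Submodule.mem_one.1 hz
      refine ⟨y, ?_⟩
      rw [hf]
      simp only [LinearMap.comp_apply, Submodule.mkQ_apply]
      congr 1
      exact Subtype.ext (by simpa using hy)
    have hker : LinearMap.ker f = Ideal.span {x} := by
      ext a
      rw [LinearMap.mem_ker, hf]
      simp only [LinearMap.comp_apply, Submodule.mkQ_apply, Submodule.Quotient.mk_eq_zero]
      rw [hN, Submodule.mem_comap]
      have hsub : ((1 : Submodule R K).subtype)
          ((LinearMap.codRestrict (1 : Submodule R K) (Algebra.linearMap R K) hmem1) a)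
          = algebraMap R K a := rfl
      rw [hsub]
      constructor
      · intro h
        rw [hXdef] at h
        obtain ⟨r, hr⟩ := Submodule.mem_span_singleton.1 h
        rw [Ideal.mem_span_singleton]
        refine ⟨r, ?_⟩
        apply IsFractionRing.injective R K
        rw [← hr, map_mul, hx'def, Algebra.smul_def, mul_comm]
      · intro h
        obtain ⟨r, hr⟩ := Ideal.mem_span_singleton'.1 h
        rw [hXdef]
        refine Submodule.mem_span_singleton.2 ⟨r, ?_⟩
        rw [hx'def, Algebra.smul_def, ← map_mul, hr]
    have hq : Order.krullDim (Submodule R (R ⧸ Ideal.span {x}))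
        = Order.krullDim (Submodule R (↥(1 : Submodule R K) ⧸ N)) := by
      rw [← hker]
      exact my_modLength_congr (f.quotKerEquivOfSurjective hsurj)
    have h2 := my_qlen_eq_flen (A := (1 : Submodule R K)) (B := X) hX1
    rw [← h2, ← hq]
    exact he.symm
  -- translations to interval lengths
  have hρf : myflen (1 : Submodule R K) Λ = ((ρ : ℕ) : WithBot ℕ∞) := by
    rw [← my_qlen_flen h1Λ]; exact hρ.symm
  have hδf : myflen (1 : Submodule R K) Sm = ((δ : ℕ) : WithBot ℕ∞) := by
    rw [← my_qlen_flen h1Sm]; exact hδ.symm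
  have hcf : myflen C Sm = ((c : ℕ) : WithBot ℕ∞) := by
    rw [← my_qlen_flen (hC1.trans h1Sm)]; exact hc.symm
  have hℓ₁f : myflen (J ^ ν) ((1 : Submodule R K) / Λ) = ((ℓ₁ : ℕ) : WithBot ℕ∞) := by
    rw [← my_qlen_flen hJν1Λ]; exact hℓ₁.symm
  have hℓ₂f : myflen Λ (ω * Λ) = ((ℓ₂ : ℕ) : WithBot ℕ∞) := by
    rw [← my_qlen_flen hΛωΛ]; exact hℓ₂.symm
  -- multiplicity chain
  have hiso1 : myflen X (X * Λ) = myflen (1 : Submodule R K) Λ := by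
    have h := my_flen_mul (R := R) hx'0 (1 : Submodule R K) Λ
    rw [← hXdef, mul_one] at h
    exact h
  have hXXΛ : X ≤ X * Λ := by
    calc X = X * 1 := (mul_one X).symm
    _ ≤ X * Λ := mul_le_mul' le_rfl h1Λ
  have hXΛΛ : X * Λ ≤ Λ := by
    calc X * Λ ≤ 1 * Λ := mul_le_mul' hX1 le_rfl
    _ = Λ := one_mul Λ
  have htot : myflen X Λ = ((e + ρ : ℕ) : WithBot ℕ∞) := myflen_add hX1 h1Λ heflen hρf
  obtain ⟨a1, b1, ha1, hb1, hab1⟩ := myflen_split hXXΛ hXΛΛ htot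
  have ha1ρ : a1 = ρ := my_nat_pin ha1 (hiso1.trans hρf)
  have hXΛe : myflen (X * Λ) Λ = ((e : ℕ) : WithBot ℕ∞) := by
    have hb1e : b1 = e := by omega
    rwa [hb1e] at hb1
  have hpowΛ : ∀ k : ℕ, myflen (X ^ k * Λ) Λ = ((k * e : ℕ) : WithBot ℕ∞) := by
    intro k
    induction k with
    | zero =>
      rw [pow_zero, one_mul, Nat.zero_mul]
      exact_mod_cast myflen_self Λ
    | succ k ih =>
      have hXkΛ : X ^ k * Λ ≤ Λ := by
        calc X ^ k * Λ ≤ 1 ^ k * Λ := mul_le_mul' (my_pow_le hX1 k) le_rfl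
        _ = Λ := by rw [one_pow, one_mul]
      have hps : X * (X ^ k * Λ) = X ^ (k + 1) * Λ := by rw [pow_succ]; ring
      have hle1 : X ^ (k + 1) * Λ ≤ X * Λ := by
        rw [← hps]
        exact mul_le_mul' le_rfl hXkΛ
      have hiso2 : myflen (X ^ (k + 1) * Λ) (X * Λ) = myflen (X ^ k * Λ) Λ := by
        have h := my_flen_mul (R := R) hx'0 (X ^ k * Λ) Λ
        rw [← hXdef, hps] at h
        exact h
      have hstep : myflen (X ^ (k + 1) * Λ) (X * Λ) = ((k * e : ℕ) : WithBot ℕ∞) :=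
        hiso2.trans ih
      have hfin := myflen_add hle1 hXΛΛ hstep hXΛe
      have hnat : k * e + e = (k + 1) * e := by ring
      rwa [hnat] at hfin
  have hJνf : myflen (J ^ ν) Λ = ((ν * e : ℕ) : WithBot ℕ∞) := by
    rw [hXν]; exact hpowΛ ν
  -- splittings
  have h1ΛΛ : (1 : Submodule R K) / Λ ≤ Λ := h1Λ1.trans h1Λ
  obtain ⟨a2, b2, ha2, hb2, hab2⟩ := myflen_split hJν1Λ h1ΛΛ hJνf
  have ha2ℓ₁ : a2 = ℓ₁ := my_nat_pin ha2 hℓ₁f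
  obtain ⟨d3, b3, hd3, hb3, hab3⟩ := myflen_split h1Λ1 h1Λ hb2
  have hb3ρ : b3 = ρ := my_nat_pin hb3 hρf
  have hDd : myflen ω (ω * Λ) = ((d3 : ℕ) : WithBot ℕ∞) := hdual1.symm.trans hd3
  have htot2 : myflen (1 : Submodule R K) (ω * Λ) = ((ρ + ℓ₂ : ℕ) : WithBot ℕ∞) :=
    myflen_add h1Λ hΛωΛ hρf hℓ₂f
  obtain ⟨W, b4, hW, hb4, hab4⟩ := myflen_split hω1 hωωΛ htot2
  have hb4d : b4 = d3 := my_nat_pin hb4 hDd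
  obtain ⟨W', g, hW', hg, hab5⟩ := myflen_split hω1 hωSm hδf
  have hWW : W' = W := my_nat_pin hW' hW
  have hgC : myflen C (1 : Submodule R K) = ((g : ℕ) : WithBot ℕ∞) := hdual2.symm.trans hg
  obtain ⟨g', d', hg', hd', hab6⟩ := myflen_split hC1 h1Sm hcf
  have hg'g : g' = g := my_nat_pin hg' hgC
  have hd'δ : d' = δ := my_nat_pin hd' hδf
  -- final arithmetic
  rw [ha2ℓ₁] at hab2
  rw [hb3ρ] at hab3
  rw [hb4d] at hab4
  rw [hWW] at hab5
  rw [hg'g, hd'δ] at hab6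
  have Z1 : (ℓ₁ : ℤ) + b2 = ν * e := by exact_mod_cast hab2
  have Z2 : (d3 : ℤ) + ρ = b2 := by exact_mod_cast hab3
  have Z3 : (W : ℤ) + d3 = ρ + ℓ₂ := by exact_mod_cast hab4
  have Z4 : (W : ℤ) + g = δ := by exact_mod_cast hab5
  have Z5 : (g : ℤ) + δ = c := by exact_mod_cast hab6
  have Zc : (e : ℤ) * ν = (ν : ℤ) * e := mul_comm _ _
  linarith
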